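/- Let f : ℝ^d → ℝ, n ≥ 1, and define g : (ℝ^d)^n → ℝ by g(x₁,…,x_n) = f( (x₁ + ⋯ + x_n)/√n ). Then for all (x₁,…,x_n), Hg(x₁,…,x_n) ≥ Hf( (x₁ + ⋯ + x_n)/√n ). Moreover, if f is even and belongs to F(C,1), then g is even and belongs to F_n(C, 1/√n). -/

import Mathlib

open MeasureTheory Real

/-- The quadratic infimum convolution `Hf(x) = inf_y ( f(x+y) + |y|²/2 )`. -/
noncomputable def Hconv {E : Type*} [NormedAddCommGroup E] (f : E → ℝ) (x : E) : ℝ :=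
  ⨅ y : E, (f (x + y) + ‖y‖ ^ 2 / 2)

/-- The quadratic infimum convolution on `(ℝ^d)^n ≅ ℝ^{nd}`:
`Hg(z) = inf_w ( g(z+w) + ½|w|² )` with the Euclidean norm `|w|² = ∑ |wᵢ|²`. -/
noncomputable def Hn {d n : ℕ} (g : (Fin n → EuclideanSpace ℝ (Fin d)) → ℝ)
    (x : Fin n → EuclideanSpace ℝ (Fin d)) : ℝ :=
  ⨅ w : Fin n → EuclideanSpace ℝ (Fin d), (g (x + w) + (∑ i, ‖w i‖ ^ 2) / 2)

/-- The class `F(C,ε)`: functions that are `Cε`-Lipschitz and satisfy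
`f(x+h) + f(x-h) - 2f(x) ≤ Cε²|h|²` for all `x, h`. -/
def memF {E : Type*} [NormedAddCommGroup E] (C ε : ℝ) (f : E → ℝ) : Prop :=
  LipschitzWith (C * ε).toNNReal f ∧
    ∀ x h : E, f (x + h) + f (x - h) - 2 * f x ≤ C * ε ^ 2 * ‖h‖ ^ 2

/-- The class `F_n(C,ε)` of functions on `(ℝ^d)^n`: functions belonging to `F(C,ε)`
with respect to each `ℝ^d`-coordinate block separately. -/
def memFn {d n : ℕ} (C ε : ℝ) (f : (Fin n → EuclideanSpace ℝ (Fin d)) → ℝ) : Prop :=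
  ∀ (i : Fin n) (x : Fin n → EuclideanSpace ℝ (Fin d)),
    memF C ε fun y => f (Function.update x i y)

/-- If `g(x₁,…,x_n) = f((x₁+⋯+x_n)/√n)`, then `Hg(x₁,…,x_n) ≥ Hf((x₁+⋯+x_n)/√n)`;
moreover, if `f` is even and belongs to `F(C,1)` then `g` is even and belongs to
`F_n(C, 1/√n)`. -/
theorem avg_substitution (d n : ℕ) (hn : 1 ≤ n) (C : ℝ) (hC : 0 < C)
    (f : EuclideanSpace ℝ (Fin d) → ℝ) :
    (∀ x : Fin n → EuclideanSpace ℝ (Fin d),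
        Hconv f ((Real.sqrt n)⁻¹ • ∑ i, x i) ≤
          Hn (fun z => f ((Real.sqrt n)⁻¹ • ∑ i, z i)) x) ∧
      ((∀ z, f (-z) = f z) → memF C 1 f →
        (∀ x : Fin n → EuclideanSpace ℝ (Fin d),
            f ((Real.sqrt n)⁻¹ • ∑ i, (-x) i) = f ((Real.sqrt n)⁻¹ • ∑ i, x i)) ∧
          memFn (n := n) C (Real.sqrt n)⁻¹
            (fun z => f ((Real.sqrt n)⁻¹ • ∑ i, z i))) := by
  have hn0 : (0:ℝ) < n := by exact_mod_cast hn
  set s : ℝ := Real.sqrt n with hsdef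
  have hs : (0:ℝ) < s := Real.sqrt_pos.2 hn0
  have hs2 : s ^ 2 = n := Real.sq_sqrt hn0.le
  have hsi : (0:ℝ) ≤ s⁻¹ := by positivity
  have hns : s⁻¹ * ((n : ℝ) * s⁻¹) = 1 := by
    rw [← hs2]; field_simp
  constructor
  · intro x
    set z := s⁻¹ • ∑ i, x i with hz
    have key1 : ∀ w : Fin n → EuclideanSpace ℝ (Fin d),
        f (z + s⁻¹ • ∑ i, w i) + ‖s⁻¹ • ∑ i, w i‖ ^ 2 / 2
          ≤ f (s⁻¹ • ∑ i, (x + w) i) + (∑ i, ‖w i‖ ^ 2) / 2 := by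
      intro w
      have h1 : s⁻¹ • ∑ i, (x + w) i = z + s⁻¹ • ∑ i, w i := by
        rw [hz, ← smul_add, ← Finset.sum_add_distrib]; rfl
      rw [h1]
      have h2 : ‖s⁻¹ • ∑ i, w i‖ ^ 2 ≤ ∑ i, ‖w i‖ ^ 2 := by
        rw [norm_smul, Real.norm_eq_abs, abs_of_nonneg hsi, mul_pow]
        have h3 : ‖∑ i, w i‖ ^ 2 ≤ (∑ i, ‖w i‖) ^ 2 :=
          pow_le_pow_left₀ (norm_nonneg _) (norm_sum_le _ _) 2
        have h4 : (∑ i, ‖w i‖) ^ 2 ≤ (n : ℝ) * ∑ i, ‖w i‖ ^ 2 := by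
          have := sq_sum_le_card_mul_sum_sq (s := (Finset.univ : Finset (Fin n)))
            (f := fun i => ‖w i‖)
          simpa using this
        calc s⁻¹ ^ 2 * ‖∑ i, w i‖ ^ 2 ≤ s⁻¹ ^ 2 * ((n : ℝ) * ∑ i, ‖w i‖ ^ 2) := by
              have := h3.trans h4; gcongr
          _ = (s⁻¹ * ((n:ℝ) * s⁻¹)) * ∑ i, ‖w i‖ ^ 2 := by ring
          _ = ∑ i, ‖w i‖ ^ 2 := by rw [hns, one_mul]
      linarith
    have key2 : ∀ y : EuclideanSpace ℝ (Fin d), ∃ w : Fin n → EuclideanSpace ℝ (Fin d),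
        f (s⁻¹ • ∑ i, (x + w) i) + (∑ i, ‖w i‖ ^ 2) / 2 = f (z + y) + ‖y‖ ^ 2 / 2 := by
      intro y
      set w : Fin n → EuclideanSpace ℝ (Fin d) := (fun _ => s⁻¹ • y) with hwdef
      refine ⟨w, ?_⟩
      have h1 : ∑ i : Fin n, (x + w) i = (∑ i, x i) + (n : ℝ) • (s⁻¹ • y) := by
        simp only [Pi.add_apply]
        rw [Finset.sum_add_distrib]
        congr 1
        simp [hwdef, Finset.sum_const, ← Nat.cast_smul_eq_nsmul ℝ]
      have h2 : s⁻¹ • ∑ i : Fin n, (x + w) i = z + y := by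
        rw [h1, smul_add, smul_smul, smul_smul, mul_assoc, hns, one_smul]
      have h3 : ∑ i : Fin n, ‖w i‖ ^ 2 = ‖y‖ ^ 2 := by
        simp only [hwdef]
        simp only [Finset.sum_const, Finset.card_univ, Fintype.card_fin, nsmul_eq_mul]
        rw [norm_smul, Real.norm_eq_abs, abs_of_nonneg hsi, mul_pow]
        rw [show (n:ℝ) * (s⁻¹ ^ 2 * ‖y‖ ^ 2) = (s⁻¹ * ((n:ℝ) * s⁻¹)) * ‖y‖^2 from by ring,
          hns, one_mul]
      rw [h2, h3]
    by_cases hb : BddBelow (Set.range fun y : EuclideanSpace ℝ (Fin d) =>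
        f (z + y) + ‖y‖ ^ 2 / 2)
    · refine le_ciInf fun w => ?_
      calc Hconv f z ≤ f (z + s⁻¹ • ∑ i, w i) + ‖s⁻¹ • ∑ i, w i‖ ^ 2 / 2 :=
            ciInf_le hb _
        _ ≤ _ := key1 w
    · have h1 : Hconv f z = 0 := Real.iInf_of_not_bddBelow hb
      have hb2 : ¬ BddBelow (Set.range fun w : Fin n → EuclideanSpace ℝ (Fin d) =>
          f (s⁻¹ • ∑ i, (x + w) i) + (∑ i, ‖w i‖ ^ 2) / 2) := by
        intro hB
        apply hb
        obtain ⟨m, hm⟩ := hB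
        refine ⟨m, ?_⟩
        rintro _ ⟨y, rfl⟩
        obtain ⟨w, hw⟩ := key2 y
        show m ≤ f (z + y) + ‖y‖ ^ 2 / 2
        rw [← hw]
        exact hm ⟨w, rfl⟩
      have h2 : Hn (fun z => f (s⁻¹ • ∑ i, z i)) x = 0 :=
        Real.iInf_of_not_bddBelow hb2
      rw [h1, h2]
  · rintro hf ⟨hlip, hconc⟩
    constructor
    · intro x
      have h1 : ∑ i, (-x) i = -∑ i, x i := by simp
      rw [h1, smul_neg, hf]
    · intro i x
      set b := ∑ j ∈ Finset.univ \ {i}, x j with hbdef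
      have hupd : ∀ y : EuclideanSpace ℝ (Fin d),
          ∑ j, Function.update x i y j = y + b :=
        fun y => Finset.sum_update_of_mem (Finset.mem_univ i) x y
      have hC1 : ((C * 1).toNNReal : ℝ) = C := by
        rw [Real.coe_toNNReal _ (by linarith)]; ring
      constructor
      · rw [lipschitzWith_iff_dist_le_mul]
        intro y y'
        simp only [hupd]
        calc dist (f (s⁻¹ • (y + b))) (f (s⁻¹ • (y' + b)))
            ≤ C * dist (s⁻¹ • (y + b)) (s⁻¹ • (y' + b)) := by
              have := hlip.dist_le_mul (s⁻¹ • (y + b)) (s⁻¹ • (y' + b))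
              rwa [hC1] at this
          _ = C * s⁻¹ * dist y y' := by
              rw [dist_smul₀, Real.norm_eq_abs, abs_of_nonneg hsi, dist_add_right]; ring
          _ = ((C * s⁻¹).toNNReal : ℝ) * dist y y' := by
              rw [Real.coe_toNNReal _ (by positivity)]
      · intro y h
        simp only [hupd]
        have e1 : s⁻¹ • (y + h + b) = s⁻¹ • (y + b) + s⁻¹ • h := by
          rw [show y + h + b = (y + b) + h from by abel, smul_add]
        have e2 : s⁻¹ • (y - h + b) = s⁻¹ • (y + b) - s⁻¹ • h := by
          rw [show y - h + b = (y + b) - h from by abel, smul_sub]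
        rw [e1, e2]
        calc f (s⁻¹ • (y + b) + s⁻¹ • h) + f (s⁻¹ • (y + b) - s⁻¹ • h)
              - 2 * f (s⁻¹ • (y + b))
            ≤ C * 1 ^ 2 * ‖s⁻¹ • h‖ ^ 2 := hconc _ _
          _ = C * (s⁻¹) ^ 2 * ‖h‖ ^ 2 := by
              rw [norm_smul, Real.norm_eq_abs, abs_of_nonneg hsi, mul_pow]; ring
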